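/- Let m ≥ 1, let g₁, …, g_m : ℕ → ℝ be square-summable scalar signals, and let k₁, …, k_m > 0. For α ∈ ℝ^m and t ∈ ℕ^m let y(α,t) : ℕ → ℝ^m be the signal whose i-th component at time t' is α_i · (shift_{t_i} g_i)(t'). Then the supremum of { ‖y(α,t)‖₂ : α ∈ ℝ^m with |α_i| ≤ k_i for all i, t ∈ ℕ^m } equals (∑_{i=1}^m k_i² ∑_{t=0}^∞ g_i(t)²)^{1/2}. (Sensitivity of a diagonal m-input m-output LTI system under the event-stream adjacency relation.) -/

import Mathlib

/-- Time shift of a signal: `(shift t₀ g) t = g (t - t₀)` if `t ≥ t₀`, and `0` otherwise. -/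
noncomputable def shift {E : Type*} [Zero E] (t₀ : ℕ) (g : ℕ → E) : ℕ → E :=
  fun t => if t₀ ≤ t then g (t - t₀) else 0

/-- ℓ²-norm of a signal. -/
noncomputable def l2norm {E : Type*} [NormedAddCommGroup E] (y : ℕ → E) : ℝ :=
  Real.sqrt (∑' t, ‖y t‖ ^ 2)

lemma shift_hasSum (t₀ : ℕ) (h : ℕ → ℝ) (a : ℝ) :
    HasSum (shift t₀ h) a ↔ HasSum h a := by
  have hinj : Function.Injective (fun n : ℕ => n + t₀) := add_left_injective t₀
  have h0 : ∀ x ∉ Set.range (fun n : ℕ => n + t₀), shift t₀ h x = 0 := by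
    intro x hx
    simp only [shift, ite_eq_right_iff]
    intro hle
    exact absurd ⟨x - t₀, Nat.sub_add_cancel hle⟩ hx
  have key := hinj.hasSum_iff (f := shift t₀ h) (a := a) h0
  have hcomp : shift t₀ h ∘ (fun n : ℕ => n + t₀) = h := by
    funext n; simp [shift]
  rw [hcomp] at key
  exact key.symm

lemma shift_summable {t₀ : ℕ} {h : ℕ → ℝ} (hs : Summable h) :
    Summable (shift t₀ h) := by
  obtain ⟨a, ha⟩ := hs
  exact ⟨a, (shift_hasSum t₀ h a).mpr ha⟩

lemma shift_tsum (t₀ : ℕ) {h : ℕ → ℝ} (hs : Summable h) :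
    ∑' t, shift t₀ h t = ∑' t, h t :=
  ((shift_hasSum t₀ h _).mpr hs.hasSum).tsum_eq

lemma shift_sq (t₀ : ℕ) (h : ℕ → ℝ) (t' : ℕ) :
    (shift t₀ h t') ^ 2 = shift t₀ (fun t => h t ^ 2) t' := by
  simp only [shift]; split_ifs <;> simp

/-- For the sup norm on `Fin m → ℝ`, the square of the norm is at most the
sum of squares of the components. -/
lemma pi_norm_sq_le {m : ℕ} (x : Fin m → ℝ) : ‖x‖ ^ 2 ≤ ∑ i, (x i) ^ 2 := by
  have h1 : ‖x‖ ≤ Real.sqrt (∑ i, (x i) ^ 2) := by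
    refine (pi_norm_le_iff_of_nonneg (Real.sqrt_nonneg _)).mpr fun i => ?_
    rw [Real.norm_eq_abs]
    have hs : 0 ≤ ∑ j, (x j) ^ 2 := Finset.sum_nonneg fun j _ => sq_nonneg _
    have h2 : |x i| ^ 2 ≤ ∑ j, (x j) ^ 2 := by
      rw [sq_abs]
      exact Finset.single_le_sum (fun j _ => sq_nonneg (x j)) (Finset.mem_univ i)
    nlinarith [Real.sq_sqrt hs, Real.sqrt_nonneg (∑ j, (x j) ^ 2), abs_nonneg (x i)]
  calc ‖x‖ ^ 2 ≤ Real.sqrt (∑ i, (x i) ^ 2) ^ 2 :=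
        pow_le_pow_left₀ (norm_nonneg _) h1 2
    _ = ∑ i, (x i) ^ 2 := Real.sq_sqrt (Finset.sum_nonneg fun j _ => sq_nonneg _)

lemma pi_comp_sq_le {m : ℕ} (x : Fin m → ℝ) (i : Fin m) : (x i) ^ 2 ≤ ‖x‖ ^ 2 := by
  have h := norm_le_pi_norm x i
  calc (x i) ^ 2 = ‖x i‖ ^ 2 := by rw [Real.norm_eq_abs, sq_abs]
    _ ≤ ‖x‖ ^ 2 := pow_le_pow_left₀ (norm_nonneg _) h 2

lemma euc_norm_sq_le {m : ℕ} (x : Fin m → ℝ) :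
    ‖(WithLp.toLp 2 x : EuclideanSpace ℝ (Fin m))‖ ^ 2 ≤ ∑ i, (x i) ^ 2 := by
  rw [EuclideanSpace.norm_sq_eq]; simp [sq_abs]

lemma euc_comp_sq_le {m : ℕ} (x : Fin m → ℝ) (i : Fin m) :
    (x i) ^ 2 ≤ ‖(WithLp.toLp 2 x : EuclideanSpace ℝ (Fin m))‖ ^ 2 := by
  rw [EuclideanSpace.norm_sq_eq]
  simpa [sq_abs] using
    Finset.single_le_sum (f := fun j => x j ^ 2) (fun j _ => sq_nonneg _) (Finset.mem_univ i)

theorem diagonal_sensitivity (m : ℕ) (hm : 1 ≤ m)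
    (g : Fin m → ℕ → ℝ)
    (hg : ∀ i, Summable fun t => (g i t) ^ 2)
    (k : Fin m → ℝ) (hk : ∀ i, 0 < k i) :
    sSup {x : ℝ | ∃ (α : Fin m → ℝ) (t : Fin m → ℕ), (∀ i, |α i| ≤ k i) ∧
        x = l2norm (fun t' => (WithLp.toLp 2 (fun i => α i * shift (t i) (g i) t') :
          EuclideanSpace ℝ (Fin m)))} =
      Real.sqrt (∑ i, k i ^ 2 * ∑' t, (g i t) ^ 2) := by
  classical
  set A := {x : ℝ | ∃ (α : Fin m → ℝ) (t : Fin m → ℕ), (∀ i, |α i| ≤ k i) ∧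
      x = l2norm (fun t' => (WithLp.toLp 2 (fun i => α i * shift (t i) (g i) t') :
        EuclideanSpace ℝ (Fin m)))} with hA
  -- summability of the componentwise-squared signals, for any α, t
  have hFsum : ∀ (α : Fin m → ℝ) (t : Fin m → ℕ),
      Summable (fun t' => ∑ i, (α i * shift (t i) (g i) t') ^ 2) := by
    intro α t
    refine summable_sum fun i _ => ?_
    have h1 : Summable (fun t' => α i ^ 2 * shift (t i) (fun s => g i s ^ 2) t') :=
      (shift_summable (hg i)).mul_left _
    refine h1.congr fun t' => ?_
    rw [mul_pow, shift_sq]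
  have hFtsum : ∀ (α : Fin m → ℝ) (t : Fin m → ℕ),
      (∑' t', ∑ i, (α i * shift (t i) (g i) t') ^ 2)
        = ∑ i, α i ^ 2 * ∑' s, (g i s) ^ 2 := by
    intro α t
    have hsum : ∀ i : Fin m, Summable (fun t' => (α i * shift (t i) (g i) t') ^ 2) := by
      intro i
      refine ((shift_summable (t₀ := t i) (hg i)).mul_left (α i ^ 2)).congr fun t' => ?_
      rw [mul_pow, shift_sq]
    rw [Summable.tsum_finsetSum (fun i _ => hsum i)]
    refine Finset.sum_congr rfl fun i _ => ?_
    have : (fun t' => (α i * shift (t i) (g i) t') ^ 2)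
        = fun t' => α i ^ 2 * shift (t i) (fun s => g i s ^ 2) t' := by
      funext t'; rw [mul_pow, shift_sq]
    rw [this, tsum_mul_left, shift_tsum (t i) (hg i)]
  -- summability of the squared sup-norm signal
  have hqsum : ∀ (α : Fin m → ℝ) (t : Fin m → ℕ),
      Summable (fun t' => ‖(WithLp.toLp 2 (fun i => α i * shift (t i) (g i) t') :
        EuclideanSpace ℝ (Fin m))‖ ^ 2) := by
    intro α t
    exact Summable.of_nonneg_of_le (fun t' => sq_nonneg _)
      (fun t' => euc_norm_sq_le _) (hFsum α t)
  -- upper bound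
  have hub : ∀ x ∈ A, x ≤ Real.sqrt (∑ i, k i ^ 2 * ∑' t, (g i t) ^ 2) := by
    rintro x ⟨α, t, hα, rfl⟩
    unfold l2norm
    apply Real.sqrt_le_sqrt
    calc (∑' t', ‖(WithLp.toLp 2 (fun i => α i * shift (t i) (g i) t') :
          EuclideanSpace ℝ (Fin m))‖ ^ 2)
        ≤ ∑' t', ∑ i, (α i * shift (t i) (g i) t') ^ 2 :=
          Summable.tsum_le_tsum (fun t' => euc_norm_sq_le _) (hqsum α t) (hFsum α t)
      _ = ∑ i, α i ^ 2 * ∑' s, (g i s) ^ 2 := hFtsum α t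
      _ ≤ ∑ i, k i ^ 2 * ∑' s, (g i s) ^ 2 := by
          refine Finset.sum_le_sum fun i _ => ?_
          have h1 : α i ^ 2 ≤ k i ^ 2 := by
            rw [← sq_abs]
            exact pow_le_pow_left₀ (abs_nonneg _) (hα i) 2
          exact mul_le_mul_of_nonneg_right h1 (tsum_nonneg fun s => sq_nonneg _)
  have hbdd : BddAbove A := ⟨_, hub⟩
  have hkabs : ∀ i, |k i| ≤ k i := fun i => (abs_of_pos (hk i)).le
  -- lower bound: for each N, an element of A exceeds the N-truncated value
  have hlow : ∀ N : ℕ,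
      Real.sqrt (∑ i, k i ^ 2 * ∑ j ∈ Finset.range N, (g i j) ^ 2) ≤ sSup A := by
    intro N
    set T : Fin m → ℕ := fun i => i.val * N with hT
    have hmem : l2norm (fun t' => (WithLp.toLp 2 (fun i => k i * shift (T i) (g i) t') :
        EuclideanSpace ℝ (Fin m))) ∈ A := ⟨k, T, hkabs, rfl⟩
    refine le_trans ?_ (le_csSup hbdd hmem)
    unfold l2norm
    apply Real.sqrt_le_sqrt
    -- q t' := squared sup norm at time t'
    set q : ℕ → ℝ := fun t' => ‖(WithLp.toLp 2 (fun i => k i * shift (T i) (g i) t') :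
        EuclideanSpace ℝ (Fin m))‖ ^ 2 with hq
    have hq0 : ∀ t', 0 ≤ q t' := fun t' => sq_nonneg _
    set s : Finset (Fin m × ℕ) := Finset.univ ×ˢ Finset.range N with hs
    have hinj : ∀ p₁ ∈ s, ∀ p₂ ∈ s,
        p₁.2 + p₁.1.val * N = p₂.2 + p₂.1.val * N → p₁ = p₂ := by
      rintro ⟨i₁, j₁⟩ hp₁ ⟨i₂, j₂⟩ hp₂ heq
      simp only [hs, Finset.mem_product, Finset.mem_range, Finset.mem_univ,
        true_and] at hp₁ hp₂
      have hj : j₁ = j₂ := by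
        have h1 : (j₁ + i₁.val * N) % N = j₁ % N := Nat.add_mul_mod_self_right j₁ i₁.val N
        have h2 : (j₂ + i₂.val * N) % N = j₂ % N := Nat.add_mul_mod_self_right j₂ i₂.val N
        rw [heq, h2] at h1
        rw [Nat.mod_eq_of_lt hp₂, Nat.mod_eq_of_lt hp₁] at h1
        omega
      subst hj
      have hN : 0 < N := Nat.pos_of_ne_zero (by rintro rfl; exact Nat.not_lt_zero _ hp₁)
      have hi : i₁.val * N = i₂.val * N := Nat.add_left_cancel heq
      have : i₁.val = i₂.val := Nat.eq_of_mul_eq_mul_right hN hi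
      simp [Fin.ext_iff, this]
    calc (∑ i, k i ^ 2 * ∑ j ∈ Finset.range N, (g i j) ^ 2)
        = ∑ p ∈ s, (k p.1 * g p.1 p.2) ^ 2 := by
          rw [hs, Finset.sum_product]
          refine Finset.sum_congr rfl fun i _ => ?_
          rw [Finset.mul_sum]
          exact Finset.sum_congr rfl fun j _ => by ring
      _ ≤ ∑ p ∈ s, q (p.2 + p.1.val * N) := by
          refine Finset.sum_le_sum fun p hp => ?_
          have h := euc_comp_sq_le
            (fun i => k i * shift (T i) (g i) (p.2 + p.1.val * N)) p.1
          have hcomp : shift (T p.1) (g p.1) (p.2 + p.1.val * N) = g p.1 p.2 := by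
            simp [hT, shift, Nat.le_add_left, Nat.add_sub_cancel]
          simp only [hq]
          rw [← hcomp]
          simpa using h
      _ = ∑ t' ∈ s.image (fun p : Fin m × ℕ => p.2 + p.1.val * N), q t' :=
          (Finset.sum_image hinj).symm
      _ ≤ ∑' t', q t' :=
          Summable.sum_le_tsum _ (fun t' _ => hq0 t') (hqsum k T)
  -- limit argument
  have htend : Filter.Tendsto
      (fun N => Real.sqrt (∑ i, k i ^ 2 * ∑ j ∈ Finset.range N, (g i j) ^ 2))
      Filter.atTop (nhds (Real.sqrt (∑ i, k i ^ 2 * ∑' t, (g i t) ^ 2))) := by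
    refine (Real.continuous_sqrt.tendsto _).comp ?_
    exact tendsto_finset_sum _ fun i _ =>
      ((hg i).hasSum.tendsto_sum_nat).const_mul (k i ^ 2)
  have hne : A.Nonempty := ⟨_, k, fun _ => 0, hkabs, rfl⟩
  exact le_antisymm (csSup_le hne hub) (le_of_tendsto' htend hlow)
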